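/- Let r_n be the number of R-colorings of size n of lambda skeletons of degree 0 (equivalently, the number of closed normal planar lambda terms of size n), and let R₀(z) = Σ_{n≥0} r_n zⁿ ∈ ℚ[[z]]. Then R₀ satisfies the algebraic identity (54·z·R₀(z) + 1 − 18·z)² = (1 − 12·z)³ in ℚ[[z]] (equivalently, R₀(z) = −(1/(54z))(1 − 18z − (1−12z)^{3/2})). -/

import Mathlib

/-- Lambda skeletons `Λ̃(i)`, graded by degree. -/
inductive Skel : ℕ → Type
  | leaf : Skel 1
  | app : {j k : ℕ} → Skel j → Skel k → Skel (j + k)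
  | lam : {i : ℕ} → Skel (i + 1) → Skel i

/-- The two colors: `B` ("blue", neutral) and `R` ("red", normal). -/
inductive Color : Type
  | B : Color
  | R : Color
  deriving DecidableEq

/-- `Col c i p`: colorings (derivations of neutrality for `c = B`,
respectively normality for `c = R`) of the skeleton `p` of degree `i`,
by the rules (v), (a), (s), (ℓ). -/
inductive Col : Color → (i : ℕ) → Skel i → Type
  | v : Col Color.B 1 Skel.leaf
  | a {j k : ℕ} {p : Skel j} {q : Skel k} :
      Col Color.B j p → Col Color.R k q → Col Color.B (j + k) (Skel.app p q)
  | s {i : ℕ} {p : Skel i} : Col Color.B i p → Col Color.R i p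
  | l {i : ℕ} {p : Skel (i + 1)} : Col Color.R (i + 1) p → Col Color.R i (Skel.lam p)

/-- The size of a coloring: the number of uses of the s-rule in it. -/
def Col.size : {c : Color} → {i : ℕ} → {p : Skel i} → Col c i p → ℕ
  | _, _, _, Col.v => 0
  | _, _, _, Col.a d e => d.size + e.size
  | _, _, _, Col.s d => d.size + 1
  | _, _, _, Col.l d => d.size

/-- The number of colorings of color `c` and size `n` of lambda skeletons
of degree `i`. -/
noncomputable def colCount (c : Color) (n i : ℕ) : ℕ :=
  Nat.card { pp : (p : Skel i) × Col c i p // Col.size pp.2 = n }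



/-- Plain (unindexed) coloring trees. -/
inductive CT : Type
  | v : CT
  | a : CT → CT → CT
  | s : CT → CT
  | l : CT → CT

namespace CT

def size : CT → ℕ
  | v => 0
  | a d e => d.size + e.size
  | s d => d.size + 1
  | l d => d.size

def deg : CT → ℕ
  | v => 1
  | a d e => d.deg + e.deg
  | s d => d.deg
  | l d => d.deg - 1

mutual
def okB : CT → Prop
  | v => True
  | a d e => okB d ∧ okR e
  | s _ => False
  | l _ => False
def okR : CT → Prop
  | v => False
  | a _ _ => False
  | s d => okB d
  | l d => okR d ∧ 1 ≤ d.deg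
end

lemma okB_one_le_deg : ∀ t, okB t → 1 ≤ t.deg
  | v, _ => le_refl _
  | a d e, h => by
      have := okB_one_le_deg d h.1
      simp only [deg]; omega
  | s _, h => h.elim
  | l _, h => h.elim

lemma okR_one_le_size : ∀ t, okR t → 1 ≤ t.size
  | v, h => h.elim
  | a _ _, h => h.elim
  | s d, _ => by simp [size]
  | l d, h => okR_one_le_size d h.1

mutual
lemma okB_deg_le : ∀ t, okB t → t.deg ≤ t.size + 1
  | v, _ => le_refl _
  | a d e, h => by
      have h1 := okB_deg_le d h.1
      have h2 := okR_deg_le e h.2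
      simp only [deg, size]; omega
  | s _, h => h.elim
  | l _, h => h.elim
lemma okR_deg_le : ∀ t, okR t → t.deg ≤ t.size
  | v, h => h.elim
  | a _ _, h => h.elim
  | s d, h => by
      have := okB_deg_le d h
      simp only [deg, size]; omega
  | l d, h => by
      have := okR_deg_le d h.1
      simp only [deg, size]; omega
end

/-- B-colorings of size n and degree i. -/
def SB (n i : ℕ) : Type := { t : CT // okB t ∧ t.size = n ∧ t.deg = i }
/-- R-colorings of size n and degree i. -/
def SR (n i : ℕ) : Type := { t : CT // okR t ∧ t.size = n ∧ t.deg = i }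
/-- pairs (B-coloring, R-coloring) with total size n, total degree i. -/
def PB (n i : ℕ) : Type :=
  { td : CT × CT // (okB td.1 ∧ okR td.2) ∧ td.1.size + td.2.size = n ∧ td.1.deg + td.2.deg = i }

lemma SR_empty_zero (i : ℕ) : IsEmpty (SR 0 i) := by
  constructor; rintro ⟨t, h, hs, _⟩
  have := okR_one_le_size t h; omega

lemma SR_empty_of_lt {n i : ℕ} (h : n < i) : IsEmpty (SR n i) := by
  constructor; rintro ⟨t, ht, hs, hd⟩
  have := okR_deg_le t ht; omega

lemma SB_empty_zero_deg (n : ℕ) : IsEmpty (SB n 0) := by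
  constructor; rintro ⟨t, ht, _, hd⟩
  have := okB_one_le_deg t ht; omega

lemma SB_empty_of_lt {n i : ℕ} (h : n + 1 < i) : IsEmpty (SB n i) := by
  constructor; rintro ⟨t, ht, hs, hd⟩
  have := okB_deg_le t ht; omega

/-- Decomposition of B-colorings. -/
def eB (n i : ℕ) : SB n i ≃ (PLift (n = 0 ∧ i = 1)) ⊕ PB n i where
  toFun := fun ⟨t, h⟩ =>
    match t, h with
    | .v, ⟨_, hs, hd⟩ => Sum.inl ⟨hs.symm, hd.symm⟩
    | .a d e, ⟨ht, hs, hd⟩ => Sum.inr ⟨(d, e), ht, hs, hd⟩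
    | .s _, ⟨ht, _, _⟩ => ht.elim
    | .l _, ⟨ht, _, _⟩ => ht.elim
  invFun := fun x =>
    match x with
    | Sum.inl ⟨hn, hi⟩ => ⟨CT.v, trivial, hn.symm, hi.symm⟩
    | Sum.inr ⟨(d, e), h1, h2, h3⟩ => ⟨CT.a d e, h1, h2, h3⟩
  left_inv := by rintro ⟨t, ht, hs, hd⟩; cases t
                 · rfl
                 · rfl
                 · exact ht.elim
                 · exact ht.elim
  right_inv := by rintro (⟨⟨hn, hi⟩⟩ | ⟨⟨d, e⟩, h1, h2, h3⟩) <;> rfl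

/-- Decomposition of R-colorings (positive size). -/
def eR (n i : ℕ) : SR (n + 1) i ≃ SB n i ⊕ SR (n + 1) (i + 1) where
  toFun := fun ⟨t, h⟩ =>
    match t, h with
    | .v, ⟨ht, _, _⟩ => ht.elim
    | .a _ _, ⟨ht, _, _⟩ => ht.elim
    | .s d, ⟨ht, hs, hd⟩ => Sum.inl ⟨d, ht, by simpa [size] using hs, by simpa [deg] using hd⟩
    | .l d, ⟨ht, hs, hd⟩ => Sum.inr ⟨d, ht.1, by simpa [size] using hs, by
        have := ht.2; simp only [deg] at hd; omega⟩
  invFun := fun x =>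
    match x with
    | Sum.inl ⟨d, h1, h2, h3⟩ => ⟨CT.s d, h1, by simp [size, h2], by simpa [deg] using h3⟩
    | Sum.inr ⟨d, h1, h2, h3⟩ => ⟨CT.l d, ⟨h1, by omega⟩, by simpa [size] using h2, by simp [deg, h3]⟩
  left_inv := by rintro ⟨t, ht, hs, hd⟩; cases t
                 · exact ht.elim
                 · exact ht.elim
                 · rfl
                 · rfl
  right_inv := by rintro (⟨d, h1, h2, h3⟩ | ⟨d, h1, h2, h3⟩) <;> rfl

end CT

namespace CT

/-- classification of a pair by (degree, size) of the B-part -/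
def classer {n i : ℕ} (td : PB n i) : Fin (i + 1) × Fin (n + 1) :=
  (⟨td.1.1.deg, by have := td.2.2.2; omega⟩, ⟨td.1.1.size, by have := td.2.2.1; omega⟩)

/-- fibers of the classification -/
def fiberEquiv (n i : ℕ) (jm : Fin (i + 1) × Fin (n + 1)) :
    { td : PB n i // classer td = jm } ≃ SB jm.2 jm.1 × SR (n - jm.2) (i - jm.1) where
  toFun := fun ⟨⟨⟨d, e⟩, h1, h2, h3⟩, hf⟩ =>
    have h2' : d.size + e.size = n := h2
    have h3' : d.deg + e.deg = i := h3
    have hd : d.deg = (jm.1 : ℕ) := by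
      have := congrArg (fun x => (x.1 : ℕ)) hf; simpa [classer] using this
    have hs : d.size = (jm.2 : ℕ) := by
      have := congrArg (fun x => (x.2 : ℕ)) hf; simpa [classer] using this
    (⟨d, h1.1, hs, hd⟩, ⟨e, h1.2, by omega, by omega⟩)
  invFun := fun (⟨d, h1, h2, h3⟩, ⟨e, h4, h5, h6⟩) =>
    ⟨⟨(d, e), ⟨h1, h4⟩,
      by show d.size + e.size = n; have := jm.2.2; omega,
      by show d.deg + e.deg = i; have := jm.1.2; omega⟩,
      by rw [Prod.ext_iff]; exact ⟨Fin.ext h3, Fin.ext h2⟩⟩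
  left_inv := by rintro ⟨⟨⟨d, e⟩, h1, h2, h3⟩, hf⟩; rfl
  right_inv := by rintro ⟨⟨d, h1, h2, h3⟩, ⟨e, h4, h5, h6⟩⟩; rfl

/-- PB as a sigma of fibers -/
noncomputable def pbEquiv (n i : ℕ) :
    PB n i ≃ Σ jm : Fin (i + 1) × Fin (n + 1), SB jm.2 jm.1 × SR (n - jm.2) (i - jm.1) :=
  (Equiv.sigmaFiberEquiv (classer (n := n) (i := i))).symm.trans
    (Equiv.sigmaCongrRight (fiberEquiv n i))

/-- Finiteness -/
theorem finB : ∀ n, ∀ i, Finite (SB n i) := by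
  intro n
  induction n using Nat.strong_induction_on with
  | _ n IH =>
    -- R-colorings of size l ≤ n are finite
    have hR : ∀ l, l ≤ n → ∀ k, Finite (SR l k) := by
      intro l hl k
      match l with
      | 0 => exact @Finite.of_subsingleton _ ((SR_empty_zero k).instSubsingleton)
      | (m + 1) =>
        -- descending induction on k
        have : ∀ j k', m + 2 - k' ≤ j → Finite (SR (m + 1) k') := by
          intro j
          induction j with
          | zero => intro k' hk'; exact @Finite.of_subsingleton _ ((SR_empty_of_lt (by omega)).instSubsingleton)
          | succ j IHj =>
            intro k' hk'
            by_cases hbig : m + 1 < k'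
            · exact @Finite.of_subsingleton _ ((SR_empty_of_lt hbig).instSubsingleton)
            · have f1 : Finite (SB m k') := IH m (by omega) k'
              have f2 : Finite (SR (m + 1) (k' + 1)) := IHj (k' + 1) (by omega)
              exact Finite.of_equiv _ (eR m k').symm
        exact this (m + 2) k (by omega)
    -- now B-colorings of size n
    intro i
    have : Finite (PB n i) := by
      haveI : ∀ jm : Fin (i + 1) × Fin (n + 1), Finite (SB jm.2 jm.1 × SR (n - jm.2) (i - jm.1)) := by
        rintro ⟨j, m⟩
        rcases Nat.lt_or_ge (m : ℕ) n with hm | hm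
        · have f1 : Finite (SB m j) := IH m (by omega) j
          have f2 : Finite (SR (n - m) (i - j)) := hR _ (by omega) _
          exact Finite.instProd
        · -- m = n, so R-part has size 0
          have hm' : (m : ℕ) = n := by have := m.2; omega
          haveI : IsEmpty (SR (n - m) (i - j)) := by rw [hm', Nat.sub_self]; exact SR_empty_zero _
          haveI : IsEmpty (SB m j × SR (n - m) (i - j)) := Prod.isEmpty_right
          exact Finite.of_subsingleton
      exact Finite.of_equiv _ (pbEquiv n i).symm
    exact Finite.of_equiv _ (eB n i).symm

theorem finR : ∀ n, ∀ i, Finite (SR n i) := by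
  intro n i
  match n with
  | 0 => exact @Finite.of_subsingleton _ ((SR_empty_zero i).instSubsingleton)
  | (m + 1) =>
    have : ∀ j k', m + 2 - k' ≤ j → Finite (SR (m + 1) k') := by
      intro j
      induction j with
      | zero => intro k' hk'; exact @Finite.of_subsingleton _ ((SR_empty_of_lt (by omega)).instSubsingleton)
      | succ j IHj =>
        intro k' hk'
        by_cases hbig : m + 1 < k'
        · exact @Finite.of_subsingleton _ ((SR_empty_of_lt hbig).instSubsingleton)
        · have f1 : Finite (SB m k') := finB m k'
          have f2 : Finite (SR (m + 1) (k' + 1)) := IHj (k' + 1) (by omega)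
          exact Finite.of_equiv _ (eR m k').symm
    exact this (m + 2) i (by omega)

instance (n i : ℕ) : Finite (SB n i) := finB n i
instance (n i : ℕ) : Finite (SR n i) := finR n i

/-- The counting functions. -/
noncomputable def bc (n i : ℕ) : ℕ := Nat.card (SB n i)
noncomputable def rc (n i : ℕ) : ℕ := Nat.card (SR n i)

lemma rc_zero (i : ℕ) : rc 0 i = 0 := by
  have := SR_empty_zero i; exact Nat.card_of_isEmpty

lemma rc_of_lt {n i : ℕ} (h : n < i) : rc n i = 0 := by
  have := SR_empty_of_lt h; exact Nat.card_of_isEmpty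

lemma bc_zero_deg (n : ℕ) : bc n 0 = 0 := by
  have := SB_empty_zero_deg n; exact Nat.card_of_isEmpty

lemma bc_of_lt {n i : ℕ} (h : n + 1 < i) : bc n i = 0 := by
  have := SB_empty_of_lt h; exact Nat.card_of_isEmpty

instance (n i : ℕ) : Finite (PB n i) := Finite.of_equiv _ (pbEquiv n i).symm

/-- recurrence for R -/
lemma rc_rec (n i : ℕ) : rc (n + 1) i = bc n i + rc (n + 1) (i + 1) := by
  rw [rc, Nat.card_congr (eR n i), Nat.card_sum]; rfl

lemma card_sigma' {ι : Type*} [Fintype ι] (f : ι → Type*) [∀ j, Finite (f j)] :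
    Nat.card (Σ j, f j) = ∑ j, Nat.card (f j) := by
  letI : ∀ j, Fintype (f j) := fun j => Fintype.ofFinite _
  rw [Nat.card_eq_fintype_card, Fintype.card_sigma]
  exact Finset.sum_congr rfl fun j _ => (Nat.card_eq_fintype_card).symm

/-- recurrence for B -/
lemma bc_rec (n i : ℕ) :
    bc n i = (if n = 0 ∧ i = 1 then 1 else 0) +
      ∑ jm : Fin (i + 1) × Fin (n + 1), bc jm.2 jm.1 * rc (n - jm.2) (i - jm.1) := by
  rw [bc, Nat.card_congr (eB n i), Nat.card_sum, Nat.card_congr (pbEquiv n i), card_sigma']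
  congr 1
  · by_cases h : n = 0 ∧ i = 1 <;> simp [h, Nat.card_of_isEmpty]
  · exact Finset.sum_congr rfl fun jm _ => Nat.card_prod _ _

end CT

open CT in
def okC : Color → CT → Prop
  | Color.B => CT.okB
  | Color.R => CT.okR

def colToCT : {c : Color} → {i : ℕ} → {p : Skel i} → Col c i p → CT
  | _, _, _, Col.v => CT.v
  | _, _, _, Col.a d e => CT.a (colToCT d) (colToCT e)
  | _, _, _, Col.s d => CT.s (colToCT d)
  | _, _, _, Col.l d => CT.l (colToCT d)

lemma colToCT_deg : ∀ {c : Color} {i : ℕ} {p : Skel i} (d : Col c i p), (colToCT d).deg = i := by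
  intro c i p d
  induction d with
  | v => rfl
  | a d e ihd ihe => simp [colToCT, CT.deg, ihd, ihe]
  | s d ihd => simpa [colToCT, CT.deg] using ihd
  | l d ihd => simp [colToCT, CT.deg, ihd]

lemma colToCT_size : ∀ {c : Color} {i : ℕ} {p : Skel i} (d : Col c i p),
    (colToCT d).size = d.size := by
  intro c i p d
  induction d with
  | v => rfl
  | a d e ihd ihe => simp [colToCT, CT.size, Col.size, ihd, ihe]
  | s d ihd => simp [colToCT, CT.size, Col.size, ihd]
  | l d ihd => simp [colToCT, CT.size, Col.size, ihd]

lemma colToCT_ok : ∀ {c : Color} {i : ℕ} {p : Skel i} (d : Col c i p), okC c (colToCT d) := by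
  intro c i p d
  induction d with
  | v => trivial
  | a d e ihd ihe => exact ⟨ihd, ihe⟩
  | s d ihd => exact ihd
  | l d ihd => refine ⟨ihd, ?_⟩; rw [colToCT_deg d]; omega

/-- full data of a coloring of some skeleton of some degree -/
def U (c : Color) : Type := (i : ℕ) × ((p : Skel i) × Col c i p)

lemma colToCT_inj : ∀ {c : Color} {i : ℕ} {p : Skel i} (d : Col c i p)
    {i' : ℕ} {p' : Skel i'} (d' : Col c i' p'),
    colToCT d = colToCT d' → (⟨i, p, d⟩ : U c) = ⟨i', p', d'⟩ := by
  intro c i p d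
  induction d with
  | v => intro i' p' d' h; cases d' <;> simp [colToCT] at h; rfl
  | a d e ihd ihe =>
      intro i' p' d' h
      cases d' with
      | v => simp [colToCT] at h
      | a d'' e'' =>
          simp only [colToCT, CT.a.injEq] at h
          have h1 := ihd _ h.1
          have h2 := ihe _ h.2
          cases h1; cases h2; rfl
  | s d ihd =>
      intro i' p' d' h
      cases d' with
      | s d'' =>
          simp only [colToCT, CT.s.injEq] at h
          have h1 := ihd _ h
          cases h1; rfl
      | l d'' => simp [colToCT] at h
  | l d ihd =>
      intro i' p' d' h
      cases d' with
      | s d'' => simp [colToCT] at h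
      | l d'' =>
          simp only [colToCT, CT.l.injEq] at h
          have h1 := ihd _ h
          cases h1; rfl

lemma colToCT_surj : ∀ t : CT,
    (CT.okB t → ∃ x : U Color.B, colToCT x.2.2 = t) ∧
    (CT.okR t → ∃ x : U Color.R, colToCT x.2.2 = t) := by
  intro t
  induction t with
  | v => exact ⟨fun _ => ⟨⟨1, Skel.leaf, Col.v⟩, rfl⟩, fun h => h.elim⟩
  | a d e ihd ihe =>
      constructor
      · rintro ⟨hd, he⟩
        obtain ⟨⟨j, p, dd⟩, rfl⟩ := ihd.1 hd
        obtain ⟨⟨k, q, ee⟩, rfl⟩ := ihe.2 he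
        exact ⟨⟨j + k, Skel.app p q, Col.a dd ee⟩, rfl⟩
      · rintro h; exact h.elim
  | s d ihd =>
      refine ⟨fun h => h.elim, fun h => ?_⟩
      obtain ⟨⟨i, p, dd⟩, rfl⟩ := ihd.1 h
      exact ⟨⟨i, p, Col.s dd⟩, rfl⟩
  | l d ihd =>
      refine ⟨fun h => h.elim, fun h => ?_⟩
      obtain ⟨⟨i, p, dd⟩, rfl⟩ := ihd.2 h.1
      have hdeg : (colToCT dd).deg = i := colToCT_deg dd
      have : 1 ≤ i := by rw [← hdeg]; exact h.2
      match i, p, dd, hdeg with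
      | i0 + 1, p, dd, hdeg =>
        exact ⟨⟨i0, Skel.lam p, Col.l dd⟩, rfl⟩

open CT in
lemma colCount_eq (c : Color) (n i : ℕ) :
    colCount c n i = Nat.card { t : CT // okC c t ∧ t.size = n ∧ t.deg = i } := by
  apply Nat.card_eq_of_bijective
    (fun pp => ⟨colToCT pp.1.2, colToCT_ok _, by rw [colToCT_size]; exact pp.2,
      colToCT_deg _⟩)
  constructor
  · rintro ⟨⟨p, d⟩, hp⟩ ⟨⟨p', d'⟩, hp'⟩ h
    have h2 : colToCT d = colToCT d' := congrArg Subtype.val h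
    have h3 := colToCT_inj d d' h2
    have h4 := (Sigma.mk.inj_iff.mp h3).2
    have h5 : (⟨p, d⟩ : (p : Skel i) × Col c i p) = ⟨p', d'⟩ := eq_of_heq h4
    exact Subtype.ext h5
  · rintro ⟨t, hok, hs, hd⟩
    rcases c with _ | _
    · obtain ⟨⟨i', p, d⟩, rfl⟩ := (colToCT_surj t).1 hok
      have : i' = i := by rw [← colToCT_deg d, hd]
      subst this
      exact ⟨⟨⟨p, d⟩, by rw [← colToCT_size d]; exact hs⟩, rfl⟩
    · obtain ⟨⟨i', p, d⟩, rfl⟩ := (colToCT_surj t).2 hok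
      have : i' = i := by rw [← colToCT_deg d, hd]
      subst this
      exact ⟨⟨⟨p, d⟩, by rw [← colToCT_size d]; exact hs⟩, rfl⟩

lemma colCount_B (n i : ℕ) : colCount Color.B n i = CT.bc n i := colCount_eq _ n i
lemma colCount_R (n i : ℕ) : colCount Color.R n i = CT.rc n i := colCount_eq _ n i

namespace CT

open Polynomial PowerSeries

noncomputable def Bq (n : ℕ) : Polynomial ℚ :=
  ∑ i ∈ Finset.range (n + 2), Polynomial.C (bc n i : ℚ) * Polynomial.X ^ i
noncomputable def Rq (n : ℕ) : Polynomial ℚ :=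
  ∑ i ∈ Finset.range (n + 2), Polynomial.C (rc n i : ℚ) * Polynomial.X ^ i

lemma Bq_coeff (n i : ℕ) : (Bq n).coeff i = (bc n i : ℚ) := by
  rw [Bq, Polynomial.finset_sum_coeff]
  simp only [Polynomial.coeff_C_mul, Polynomial.coeff_X_pow, mul_ite, mul_one, mul_zero]
  rw [Finset.sum_ite_eq (Finset.range (n + 2)) i (fun j => (bc n j : ℚ))]
  by_cases h : i ∈ Finset.range (n + 2)
  · simp [h]
  · simp only [h, if_false]
    rw [Finset.mem_range] at h
    rw [bc_of_lt (by omega)]; simp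

lemma Rq_coeff (n i : ℕ) : (Rq n).coeff i = (rc n i : ℚ) := by
  rw [Rq, Polynomial.finset_sum_coeff]
  simp only [Polynomial.coeff_C_mul, Polynomial.coeff_X_pow, mul_ite, mul_one, mul_zero]
  rw [Finset.sum_ite_eq (Finset.range (n + 2)) i (fun j => (rc n j : ℚ))]
  by_cases h : i ∈ Finset.range (n + 2)
  · simp [h]
  · simp only [h, if_false]
    rw [Finset.mem_range] at h
    rw [rc_of_lt (by omega)]; simp

lemma Rq_zero : Rq 0 = 0 := by
  ext i; rw [Rq_coeff, rc_zero]; simp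

/-- E2 : the lam/s-rule recurrence, polynomial form -/
lemma E2 (n : ℕ) :
    (Polynomial.X - 1) * Rq (n + 1) = Polynomial.X * Bq n - Polynomial.C (rc (n + 1) 0 : ℚ) := by
  ext k
  rw [sub_mul, one_mul]
  simp only [Polynomial.coeff_sub]
  cases k with
  | zero =>
      simp only [Polynomial.mul_coeff_zero, Polynomial.coeff_X_zero, zero_mul,
        Polynomial.coeff_C_zero, Rq_coeff]
  | succ k =>
      rw [Polynomial.coeff_X_mul, Polynomial.coeff_X_mul, Rq_coeff, Rq_coeff, Bq_coeff,
        Polynomial.coeff_C]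
      have h := rc_rec n k
      simp only [Nat.succ_ne_zero, if_false, sub_zero]
      push_cast [h]
      ring

/-- E1 : the leaf/app decomposition, polynomial form -/
lemma E1 (n : ℕ) :
    Bq n = (if n = 0 then (Polynomial.X : Polynomial ℚ) else 0) +
      ∑ m ∈ Finset.range (n + 1), Bq m * Rq (n - m) := by
  ext i
  rw [Polynomial.coeff_add, Polynomial.finset_sum_coeff, Bq_coeff]
  have hcast : (bc n i : ℚ) = (if n = 0 ∧ i = 1 then (1 : ℚ) else 0) +
      ∑ m ∈ Finset.range (n + 1), ∑ j ∈ Finset.range (i + 1),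
        (bc m j : ℚ) * (rc (n - m) (i - j) : ℚ) := by
    have hsum : (∑ jm : Fin (i + 1) × Fin (n + 1),
          ((bc jm.2 jm.1 : ℚ) * (rc (n - jm.2) (i - jm.1) : ℚ))) =
        ∑ m ∈ Finset.range (n + 1), ∑ j ∈ Finset.range (i + 1),
          ((bc m j : ℚ) * (rc (n - m) (i - j) : ℚ)) := by
      rw [Fintype.sum_prod_type]
      rw [show (∑ j : Fin (i + 1), ∑ m : Fin (n + 1),
            ((bc (m : ℕ) (j : ℕ) : ℚ) * (rc (n - (m : ℕ)) (i - (j : ℕ)) : ℚ))) =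
          ∑ j ∈ Finset.range (i + 1), ∑ m ∈ Finset.range (n + 1),
            ((bc m j : ℚ) * (rc (n - m) (i - j) : ℚ)) from ?_]
      · exact Finset.sum_comm
      · rw [← Fin.sum_univ_eq_sum_range]
        refine Finset.sum_congr rfl fun j _ => ?_
        rw [← Fin.sum_univ_eq_sum_range]
    rw [bc_rec n i]
    push_cast
    rw [hsum]
  rw [hcast]
  congr 1
  · by_cases hn : n = 0
    · subst hn
      rcases eq_or_ne i 1 with rfl | hi
      · simp [Polynomial.coeff_X]
      · simp [Polynomial.coeff_X, hi, Ne.symm hi]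
    · simp [hn]
  · refine Finset.sum_congr rfl fun m _ => ?_
    rw [Polynomial.coeff_mul, Finset.Nat.sum_antidiagonal_eq_sum_range_succ_mk]
    refine Finset.sum_congr rfl fun j _ => ?_
    rw [Bq_coeff, Rq_coeff]

end CT

namespace CT

open Polynomial PowerSeries

/-- the big ring `ℚ[x][[z]]` -/
abbrev A : Type := PowerSeries (Polynomial ℚ)

noncomputable def Bs : A := PowerSeries.mk Bq
noncomputable def Rs : A := PowerSeries.mk Rq
noncomputable def R0p : A := PowerSeries.mk fun n => Polynomial.C (rc n 0 : ℚ)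
noncomputable def xA : A := PowerSeries.C Polynomial.X
noncomputable def zA : A := PowerSeries.X

/-- A1 : `B = x + B·R` -/
lemma hA1 : Bs = xA + Bs * Rs := by
  refine PowerSeries.ext fun n => ?_
  rw [map_add, PowerSeries.coeff_mul, Finset.Nat.sum_antidiagonal_eq_sum_range_succ_mk]
  simp only [Bs, Rs, xA, PowerSeries.coeff_mk, PowerSeries.coeff_C]
  exact E1 n

/-- A2 : `(x − 1)·R = x·z·B − R₀` -/
lemma hA2 : (xA - 1) * Rs = xA * (zA * Bs) - R0p := by
  refine PowerSeries.ext fun n => ?_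
  have hx1 : xA - 1 = PowerSeries.C (Polynomial.X - 1) := by
    rw [map_sub, map_one]; rfl
  have hx2 : xA = PowerSeries.C Polynomial.X := rfl
  rw [hx1, PowerSeries.coeff_C_mul, map_sub, hx2, PowerSeries.coeff_C_mul]
  simp only [Bs, Rs, R0p, PowerSeries.coeff_mk]
  have hz : zA = (PowerSeries.X : A) := rfl
  cases n with
  | zero =>
      rw [hz, PowerSeries.coeff_zero_X_mul, Rq_zero, rc_zero]
      simp
  | succ n =>
      rw [hz, PowerSeries.coeff_succ_X_mul]
      simp only [PowerSeries.coeff_mk]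
      exact E2 n

/-- A3 : the quadratic equation for `R` -/
lemma hA3 : (xA - 1) * Rs ^ 2 + (R0p - xA + 1) * Rs + (xA ^ 2 * zA - R0p) = 0 := by
  linear_combination (Rs - 1) * hA2 - xA * zA * hA1

/-- coefficientwise derivative in x -/
noncomputable def der (f : A) : A :=
  PowerSeries.mk fun n => Polynomial.derivative (PowerSeries.coeff n f)

lemma der_coeff (f : A) (n : ℕ) :
    PowerSeries.coeff n (der f) = Polynomial.derivative (PowerSeries.coeff n f) := by
  simp [der]

lemma der_add (f g : A) : der (f + g) = der f + der g := by
  refine PowerSeries.ext fun n => ?_; simp [der_coeff]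

lemma der_sub (f g : A) : der (f - g) = der f - der g := by
  refine PowerSeries.ext fun n => ?_; simp [der_coeff]

lemma der_zero : der (0 : A) = 0 := by
  refine PowerSeries.ext fun n => ?_; simp [der_coeff]

lemma der_mul (f g : A) : der (f * g) = der f * g + f * der g := by
  refine PowerSeries.ext fun n => ?_
  rw [der_coeff, map_add, PowerSeries.coeff_mul, PowerSeries.coeff_mul, PowerSeries.coeff_mul,
    ← Finset.sum_add_distrib, Polynomial.derivative_sum]
  refine Finset.sum_congr rfl fun p _ => ?_
  rw [Polynomial.derivative_mul, der_coeff, der_coeff]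

lemma der_one : der (1 : A) = 0 := by
  refine PowerSeries.ext fun n => ?_
  rw [der_coeff, PowerSeries.coeff_one]
  split_ifs <;> simp

lemma der_xA : der xA = 1 := by
  refine PowerSeries.ext fun n => ?_
  rw [der_coeff, xA, PowerSeries.coeff_C, PowerSeries.coeff_one]
  split_ifs <;> simp

lemma der_zA : der zA = 0 := by
  refine PowerSeries.ext fun n => ?_
  rw [der_coeff, zA, PowerSeries.coeff_X]
  split_ifs <;> simp

lemma der_R0p : der R0p = 0 := by
  refine PowerSeries.ext fun n => ?_
  rw [der_coeff, R0p, PowerSeries.coeff_mk]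
  simp

/-- derivative of A3 -/
lemma hdA3 : Rs ^ 2 + (xA - 1) * (2 * Rs * der Rs) - Rs + (R0p - xA + 1) * der Rs
    + 2 * xA * zA = 0 := by
  have h0 : xA * (Rs * Rs) - Rs * Rs + R0p * Rs - xA * Rs + Rs + xA * (xA * zA) - R0p
      = 0 := by linear_combination hA3
  have h := congrArg der h0
  simp only [der_sub, der_add, der_mul, der_xA, der_zA, der_R0p, der_zero, one_mul, mul_zero,
    mul_one, zero_mul, add_zero, zero_add, sub_zero] at h
  linear_combination h

end CT

namespace CT

open Polynomial PowerSeries Finset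

/-- the shuffle identity for nested antidiagonal sums -/
lemma shuffle {M : Type*} [AddCommMonoid M] (m : ℕ) (F : ℕ → ℕ → ℕ → ℕ → M) :
    ∑ uw ∈ antidiagonal m, ∑ ab ∈ antidiagonal uw.1, ∑ cd ∈ antidiagonal uw.2,
      F ab.1 ab.2 cd.1 cd.2
    = ∑ st ∈ antidiagonal m, ∑ ac ∈ antidiagonal st.1, ∑ bd ∈ antidiagonal st.2,
      F ac.1 bd.1 ac.2 bd.2 := by
  have flat : ∀ G : (ℕ × ℕ) → (ℕ × ℕ) → (ℕ × ℕ) → M,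
      (∑ uw ∈ antidiagonal m, ∑ ab ∈ antidiagonal uw.1, ∑ cd ∈ antidiagonal uw.2, G uw ab cd)
      = ∑ x ∈ (antidiagonal m).sigma (fun uw => antidiagonal uw.1 ×ˢ antidiagonal uw.2),
          G x.1 x.2.1 x.2.2 := by
    intro G
    rw [Finset.sum_sigma]
    refine Finset.sum_congr rfl fun uw _ => ?_
    rw [Finset.sum_product]
  rw [flat, flat]
  refine Finset.sum_nbij' (fun x => ⟨(x.2.1.1 + x.2.2.1, x.2.1.2 + x.2.2.2),
      ((x.2.1.1, x.2.2.1), (x.2.1.2, x.2.2.2))⟩)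
    (fun y => ⟨(y.2.1.1 + y.2.2.1, y.2.1.2 + y.2.2.2),
      ((y.2.1.1, y.2.2.1), (y.2.1.2, y.2.2.2))⟩) ?_ ?_ ?_ ?_ ?_
  · rintro ⟨⟨u, w⟩, ⟨⟨a, b⟩, ⟨c, d⟩⟩⟩ hx
    simp only [Finset.mem_sigma, Finset.mem_product, Finset.HasAntidiagonal.mem_antidiagonal] at hx
    obtain ⟨h1, h2, h3⟩ := hx
    simp only [Finset.mem_sigma, Finset.mem_product, Finset.HasAntidiagonal.mem_antidiagonal]
    exact ⟨by omega, trivial, trivial⟩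
  · rintro ⟨⟨s, t⟩, ⟨⟨a, c⟩, ⟨b, d⟩⟩⟩ hy
    simp only [Finset.mem_sigma, Finset.mem_product, Finset.HasAntidiagonal.mem_antidiagonal] at hy
    obtain ⟨h1, h2, h3⟩ := hy
    simp only [Finset.mem_sigma, Finset.mem_product, Finset.HasAntidiagonal.mem_antidiagonal]
    exact ⟨by omega, trivial, trivial⟩
  · rintro ⟨⟨u, w⟩, ⟨⟨a, b⟩, ⟨c, d⟩⟩⟩ hx
    simp only [Finset.mem_sigma, Finset.mem_product, Finset.HasAntidiagonal.mem_antidiagonal] at hx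
    obtain ⟨h1, h2, h3⟩ := hx
    subst h2; subst h3
    rfl
  · rintro ⟨⟨s, t⟩, ⟨⟨a, c⟩, ⟨b, d⟩⟩⟩ hy
    simp only [Finset.mem_sigma, Finset.mem_product, Finset.HasAntidiagonal.mem_antidiagonal] at hy
    obtain ⟨h1, h2, h3⟩ := hy
    subst h2; subst h3
    rfl
  · rintro ⟨⟨u, w⟩, ⟨⟨a, b⟩, ⟨c, d⟩⟩⟩ hx
    rfl

/-- the diagonal ("substitute the outer variable by z") function -/
noncomputable def diagFun (g : PowerSeries (PowerSeries ℚ)) : PowerSeries ℚ :=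
  PowerSeries.mk fun m =>
    ∑ n ∈ Finset.range (m + 1), PowerSeries.coeff (m - n) (PowerSeries.coeff n g)

lemma diagFun_coeff (g : PowerSeries (PowerSeries ℚ)) (m : ℕ) :
    PowerSeries.coeff m (diagFun g)
    = ∑ n ∈ Finset.range (m + 1), PowerSeries.coeff (m - n) (PowerSeries.coeff n g) := by
  simp [diagFun]

lemma diagFun_mul (f g : PowerSeries (PowerSeries ℚ)) :
    diagFun (f * g) = diagFun f * diagFun g := by
  refine PowerSeries.ext fun m => ?_
  rw [diagFun_coeff, PowerSeries.coeff_mul]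
  calc ∑ n ∈ Finset.range (m + 1), PowerSeries.coeff (m - n) (PowerSeries.coeff n (f * g))
      = ∑ uw ∈ antidiagonal m, PowerSeries.coeff uw.2 (PowerSeries.coeff uw.1 (f * g)) :=
        (Finset.Nat.sum_antidiagonal_eq_sum_range_succ_mk
          (fun p => PowerSeries.coeff p.2 (PowerSeries.coeff p.1 (f * g))) m).symm
    _ = ∑ uw ∈ antidiagonal m, ∑ ab ∈ antidiagonal uw.1, ∑ cd ∈ antidiagonal uw.2,
          PowerSeries.coeff cd.1 (PowerSeries.coeff ab.1 f) *
          PowerSeries.coeff cd.2 (PowerSeries.coeff ab.2 g) := by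
        refine Finset.sum_congr rfl fun uw _ => ?_
        rw [PowerSeries.coeff_mul, map_sum]
        refine Finset.sum_congr rfl fun ab _ => ?_
        rw [PowerSeries.coeff_mul]
    _ = ∑ st ∈ antidiagonal m, ∑ ac ∈ antidiagonal st.1, ∑ bd ∈ antidiagonal st.2,
          PowerSeries.coeff ac.2 (PowerSeries.coeff ac.1 f) *
          PowerSeries.coeff bd.2 (PowerSeries.coeff bd.1 g) :=
        shuffle m (fun a b c d => PowerSeries.coeff c (PowerSeries.coeff a f) *
          PowerSeries.coeff d (PowerSeries.coeff b g))
    _ = ∑ st ∈ antidiagonal m,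
          (∑ ac ∈ antidiagonal st.1, PowerSeries.coeff ac.2 (PowerSeries.coeff ac.1 f)) *
          (∑ bd ∈ antidiagonal st.2, PowerSeries.coeff bd.2 (PowerSeries.coeff bd.1 g)) := by
        refine Finset.sum_congr rfl fun st _ => ?_
        exact (Finset.sum_mul_sum _ _ _ _).symm
    _ = ∑ st ∈ antidiagonal m,
          PowerSeries.coeff st.1 (diagFun f) * PowerSeries.coeff st.2 (diagFun g) := by
        refine Finset.sum_congr rfl fun st _ => ?_
        rw [diagFun_coeff, diagFun_coeff]
        congr 1
        · exact Finset.Nat.sum_antidiagonal_eq_sum_range_succ_mk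
            (fun p => PowerSeries.coeff p.2 (PowerSeries.coeff p.1 f)) st.1
        · exact Finset.Nat.sum_antidiagonal_eq_sum_range_succ_mk
            (fun p => PowerSeries.coeff p.2 (PowerSeries.coeff p.1 g)) st.2

/-- the diagonal ring hom -/
noncomputable def diag : PowerSeries (PowerSeries ℚ) →+* PowerSeries ℚ where
  toFun := diagFun
  map_zero' := by
    refine PowerSeries.ext fun m => ?_
    simp [diagFun_coeff]
  map_one' := by
    refine PowerSeries.ext fun m => ?_
    rw [diagFun_coeff]
    simp only [PowerSeries.coeff_one]
    rw [Finset.sum_eq_single 0]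
    · simp
    · intro n hn hn0
      simp [hn0]
    · intro h; simp at h
  map_add' := fun f g => by
    refine PowerSeries.ext fun m => ?_
    simp [diagFun_coeff, Finset.sum_add_distrib]
  map_mul' := diagFun_mul

lemma diag_coeff (g : PowerSeries (PowerSeries ℚ)) (m : ℕ) :
    PowerSeries.coeff m (diag g)
    = ∑ n ∈ Finset.range (m + 1), PowerSeries.coeff (m - n) (PowerSeries.coeff n g) :=
  diagFun_coeff g m

/-- the evaluation `x := Y`, `z := z` ring hom `A →+* ℚ[[z]]` -/
noncomputable def evA (Y : PowerSeries ℚ) : A →+* PowerSeries ℚ :=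
  diag.comp (PowerSeries.map (Polynomial.aeval Y).toRingHom)

lemma evA_coeff (Y : PowerSeries ℚ) (f : A) (m : ℕ) :
    PowerSeries.coeff m (evA Y f)
    = ∑ n ∈ Finset.range (m + 1),
        PowerSeries.coeff (m - n) (Polynomial.aeval Y (PowerSeries.coeff n f)) := by
  simp [evA, diag_coeff, PowerSeries.coeff_map]

lemma evA_xA (Y : PowerSeries ℚ) : evA Y xA = Y := by
  refine PowerSeries.ext fun m => ?_
  rw [evA_coeff]
  have : ∀ n : ℕ, PowerSeries.coeff (m - n) (Polynomial.aeval Y (PowerSeries.coeff n xA))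
      = if n = 0 then PowerSeries.coeff m Y else 0 := by
    intro n
    have : PowerSeries.coeff n xA = if n = 0 then Polynomial.X else 0 := by
      rw [xA]; exact PowerSeries.coeff_C _ _ -- maybe
    rw [this]
    split_ifs with h
    · subst h; simp
    · simp
  rw [Finset.sum_congr rfl fun n _ => this n]
  simp

lemma evA_zA (Y : PowerSeries ℚ) : evA Y zA = PowerSeries.X := by
  refine PowerSeries.ext fun m => ?_
  rw [evA_coeff]
  have key : ∀ n ∈ Finset.range (m + 1), PowerSeries.coeff (m - n)
      (Polynomial.aeval Y (PowerSeries.coeff n zA))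
      = if n = m then (if m = 1 then (1 : ℚ) else 0) else 0 := by
    intro n hn
    rw [Finset.mem_range] at hn
    rw [show PowerSeries.coeff n zA = if n = 1 then 1 else 0 from PowerSeries.coeff_X n]
    by_cases h1 : n = 1
    · subst h1
      simp only [if_pos rfl, map_one, PowerSeries.coeff_one]
      by_cases h2 : m = 1
      · subst h2; simp
      · have hm : m - 1 ≠ 0 := by omega
        simp [hm, show ¬(1 = m) from by omega, h2]
    · simp only [if_neg h1, map_zero]
      split_ifs with h3 h4
      · exact (h1 (by omega)).elim
      · rfl
      · rfl
  rw [Finset.sum_congr rfl key]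
  rw [Finset.sum_ite_eq' (Finset.range (m + 1)) m (fun _ => if m = 1 then (1:ℚ) else 0)]
  simp [PowerSeries.coeff_X]

/-- `R₀` as a `ℚ[[z]]` power series -/
noncomputable def R0q : PowerSeries ℚ := PowerSeries.mk fun n => (rc n 0 : ℚ)

lemma evA_R0p (Y : PowerSeries ℚ) : evA Y R0p = R0q := by
  refine PowerSeries.ext fun m => ?_
  rw [evA_coeff]
  have : ∀ n : ℕ, n ∈ Finset.range (m + 1) → PowerSeries.coeff (m - n)
      (Polynomial.aeval Y (PowerSeries.coeff n R0p))
      = if n = m then (rc m 0 : ℚ) else 0 := by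
    intro n hn
    rw [Finset.mem_range] at hn
    have h1 : PowerSeries.coeff n R0p = Polynomial.C (rc n 0 : ℚ) := by
      rw [R0p]; simp
    rw [h1, Polynomial.aeval_C]
    have h2 : (algebraMap ℚ (PowerSeries ℚ)) ((rc n 0 : ℚ)) = PowerSeries.C (rc n 0 : ℚ) := rfl
    rw [h2, PowerSeries.coeff_C]
    split_ifs with h3 h4 h4 <;> first | (subst h4; rfl) | omega | simp | rfl
  rw [Finset.sum_congr rfl this, Finset.sum_ite_eq' (Finset.range (m + 1)) m
    (fun _ => (rc m 0 : ℚ))]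
  simp [R0q]

end CT

namespace CT

open Polynomial PowerSeries Finset

/-- truncated-agreement: `aeval` only looks at low coefficients -/
lemma coeff_mul_congr {m : ℕ} {u u' v v' : PowerSeries ℚ}
    (hu : ∀ k, k < m → PowerSeries.coeff k u = PowerSeries.coeff k u')
    (hv : ∀ k, k < m → PowerSeries.coeff k v = PowerSeries.coeff k v') :
    ∀ k, k < m → PowerSeries.coeff k (u * v) = PowerSeries.coeff k (u' * v') := by
  intro k hk
  rw [PowerSeries.coeff_mul, PowerSeries.coeff_mul]
  refine Finset.sum_congr rfl fun p hp => ?_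
  rw [Finset.HasAntidiagonal.mem_antidiagonal] at hp
  rw [hu p.1 (by omega), hv p.2 (by omega)]

lemma coeff_pow_congr {m : ℕ} {u u' : PowerSeries ℚ}
    (hu : ∀ k, k < m → PowerSeries.coeff k u = PowerSeries.coeff k u') (j : ℕ) :
    ∀ k, k < m → PowerSeries.coeff k (u ^ j) = PowerSeries.coeff k (u' ^ j) := by
  induction j with
  | zero => intro k _; simp
  | succ j IH =>
      intro k hk
      rw [pow_succ, pow_succ]
      exact coeff_mul_congr IH hu k hk

lemma coeff_aeval_congr {m : ℕ} {u u' : PowerSeries ℚ}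
    (hu : ∀ k, k < m → PowerSeries.coeff k u = PowerSeries.coeff k u')
    (p : Polynomial ℚ) :
    ∀ k, k < m → PowerSeries.coeff k (Polynomial.aeval u p)
      = PowerSeries.coeff k (Polynomial.aeval u' p) := by
  induction p using Polynomial.induction_on' with
  | add p q hp hq =>
      intro k hk
      rw [map_add, map_add, map_add, map_add, hp k hk, hq k hk]
  | monomial j a =>
      intro k hk
      rw [Polynomial.aeval_monomial, Polynomial.aeval_monomial]
      exact coeff_mul_congr (fun _ _ => rfl) (coeff_pow_congr hu j) k hk

/-- the series `P = 2(x−1)R + (R₀ − x + 1)` in `A` -/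
noncomputable def Ps : A := 2 * (xA - 1) * Rs + (R0p - xA + 1)

/-- its coefficients as polynomials -/
noncomputable def Pq (n : ℕ) : Polynomial ℚ :=
  2 * (Polynomial.X - 1) * Rq n + Polynomial.C (rc n 0 : ℚ)
    - (if n = 0 then Polynomial.X - 1 else 0)

lemma Ps_coeff (n : ℕ) : PowerSeries.coeff n Ps = Pq n := by
  have t1 : PowerSeries.coeff n (2 * (xA - 1) * Rs) = 2 * (Polynomial.X - 1) * Rq n := by
    rw [show (2 : A) * (xA - 1) = PowerSeries.C (2 * (Polynomial.X - 1)) from by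
      rw [map_mul, map_sub, map_one, map_ofNat]; rfl]
    rw [PowerSeries.coeff_C_mul, Rs, PowerSeries.coeff_mk]
  have t2 : PowerSeries.coeff n (R0p - xA + 1)
      = Polynomial.C ((rc n 0 : ℚ)) - (if n = 0 then Polynomial.X else 0)
        + (if n = 0 then 1 else 0) := by
    rw [map_add, map_sub]
    rw [show PowerSeries.coeff n R0p = Polynomial.C ((rc n 0 : ℚ)) from by rw [R0p]; simp]
    rw [show PowerSeries.coeff n (xA : A) = (if n = 0 then Polynomial.X else 0) from by
      rw [xA]; exact PowerSeries.coeff_C _ _]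
    rw [PowerSeries.coeff_one]
  rw [Ps, map_add, t1, t2, Pq]
  split_ifs <;> try ring

lemma Pq_zero : Pq 0 = 1 - Polynomial.X := by
  rw [Pq, Rq_zero, rc_zero]
  simp

/-- coefficients of the kernel-method series `X(z)` -/
noncomputable def xc : ℕ → ℚ
  | m =>
    if m = 0 then 1 else
      ∑ n ∈ Finset.Ico 1 (m + 1), PowerSeries.coeff (m - n)
        (Polynomial.aeval (PowerSeries.mk fun k => if h : k < m then xc k else 0) (Pq n))
  termination_by m => m
  decreasing_by exact h

noncomputable def Xs : PowerSeries ℚ := PowerSeries.mk xc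

lemma Xs_coeff (k : ℕ) : PowerSeries.coeff k Xs = xc k := by simp [Xs]

lemma xc_zero : xc 0 = 1 := by rw [xc]; simp

lemma Xs_trunc (m : ℕ) : ∀ k, k < m →
    PowerSeries.coeff k (PowerSeries.mk fun k => if _ : k < m then xc k else 0)
      = PowerSeries.coeff k Xs := by
  intro k hk
  rw [Xs_coeff, PowerSeries.coeff_mk, dif_pos hk]

/-- the key property : `P` vanishes at `x = X(z)` -/
lemma evA_Ps : evA Xs Ps = 0 := by
  refine PowerSeries.ext fun m => ?_
  rw [evA_coeff, map_zero]
  have h0 : PowerSeries.coeff (m - 0) (Polynomial.aeval Xs (PowerSeries.coeff 0 Ps))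
      = (if m = 0 then 1 else 0) - xc m := by
    rw [Ps_coeff, Pq_zero, Nat.sub_zero, map_sub, map_one, Polynomial.aeval_X, map_sub,
      Xs_coeff, PowerSeries.coeff_one]
  have hsplit : Finset.range (m + 1) = insert 0 (Finset.Ico 1 (m + 1)) := by
    ext j
    simp only [Finset.mem_range, Finset.mem_insert, Finset.mem_Ico]
    omega
  rw [hsplit, Finset.sum_insert (by simp), h0]
  have hrest : ∑ n ∈ Finset.Ico 1 (m + 1), PowerSeries.coeff (m - n)
      (Polynomial.aeval Xs (PowerSeries.coeff n Ps)) = xc m - (if m = 0 then 1 else 0) := by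
    by_cases hm : m = 0
    · subst hm; simp [xc_zero]
    · rw [if_neg hm]
      conv_rhs => rw [xc]
      rw [if_neg hm, sub_zero]
      refine Finset.sum_congr rfl fun n hn => ?_
      rw [Finset.mem_Ico] at hn
      rw [Ps_coeff]
      exact (coeff_aeval_congr (Xs_trunc m) (Pq n) (m - n) (by omega)).symm
  rw [hrest]
  ring

end CT

namespace CT

open Polynomial PowerSeries Finset

noncomputable def Z : PowerSeries ℚ := PowerSeries.X
noncomputable def RX : PowerSeries ℚ := evA Xs Rs
noncomputable def RX' : PowerSeries ℚ := evA Xs (der Rs)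

lemma hf1 : (Xs - 1) * RX ^ 2 + (R0q - Xs + 1) * RX + (Xs ^ 2 * Z - R0q) = 0 := by
  have h := congrArg (evA Xs) hA3
  simp only [map_add, map_mul, map_pow, map_sub, map_one, map_ofNat, map_zero,
    evA_xA, evA_zA, evA_R0p] at h
  rw [RX, Z]
  linear_combination h

lemma hf2 : RX ^ 2 + (Xs - 1) * (2 * RX * RX') - RX + (R0q - Xs + 1) * RX'
    + 2 * Xs * Z = 0 := by
  have h := congrArg (evA Xs) hdA3
  simp only [map_add, map_mul, map_pow, map_sub, map_one, map_ofNat, map_zero,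
    evA_xA, evA_zA, evA_R0p] at h
  rw [RX, RX', Z]
  linear_combination h

lemma hf3 : 2 * (Xs - 1) * RX + (R0q - Xs + 1) = 0 := by
  have h := evA_Ps
  rw [Ps] at h
  simp only [map_add, map_mul, map_sub, map_one, map_ofNat, evA_xA, evA_R0p] at h
  rw [RX]
  linear_combination h

lemma Xs_ne : Xs ≠ 0 := by
  intro h
  have : PowerSeries.coeff 0 Xs = 1 := by rw [Xs_coeff, xc_zero]
  rw [h] at this
  simp at this

lemma Z_ne : Z ≠ 0 := PowerSeries.X_ne_zero

lemma hg : RX ^ 2 - RX + 2 * Xs * Z = 0 := by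
  linear_combination hf2 - RX' * hf3

lemma two_ne : (2 : PowerSeries ℚ) ≠ 0 := by
  intro h
  have := congrArg (PowerSeries.constantCoeff) h
  rw [map_ofNat, map_zero] at this
  norm_num at this

lemma four_ne : (4 : PowerSeries ℚ) ≠ 0 := by
  intro h
  have := congrArg (PowerSeries.constantCoeff) h
  rw [map_ofNat, map_zero] at this
  norm_num at this

lemma hr2 : 2 * R0q = 2 - 2 * Xs + 12 * Xs ^ 2 * Z - 8 * Xs * Z := by
  linear_combination (-4) * hf1 + 4 * RX * hf3 - 4 * (Xs - 1) * hg - 2 * hf3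

lemma hr : R0q = 1 - Xs + 6 * Xs ^ 2 * Z - 4 * Xs * Z := by
  apply mul_left_cancel₀ two_ne
  linear_combination hr2

lemma hMd : 2 * (Xs - 1) * RX = 2 * Xs - 2 - 6 * Xs ^ 2 * Z + 4 * Xs * Z := by
  linear_combination hf3 - hr

lemma hEq4 : (4 * Xs ^ 2 * Z) * (9 * Z * Xs ^ 2 - (1 + 12 * Z) * Xs + (1 + 4 * Z)) = 0 := by
  linear_combination 4 * (Xs - 1) ^ 2 * hg -
    ((2 * Xs - 2 - 6 * Xs ^ 2 * Z + 4 * Xs * Z) + 2 * (Xs - 1) * RX - 2 * (Xs - 1)) * hMd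

lemma hEq4' : 9 * Z * Xs ^ 2 - (1 + 12 * Z) * Xs + (1 + 4 * Z) = 0 := by
  have h2 : (4 : PowerSeries ℚ) * Xs ^ 2 * Z ≠ 0 :=
    mul_ne_zero (mul_ne_zero four_ne (pow_ne_zero _ Xs_ne)) Z_ne
  rcases mul_eq_zero.mp hEq4 with h | h
  · exact absurd h h2
  · exact h

lemma hL : 3 * R0q = 1 - 8 * Z - Xs * (1 - 12 * Z) := by
  linear_combination 3 * hr + 2 * hEq4'

/-- the main algebraic identity for `R0q` -/
lemma R0q_identity : (54 * Z * R0q + 1 - 18 * Z) ^ 2 = (1 - 12 * Z) ^ 3 := by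
  linear_combination (18 * Z * ((54 * Z * R0q + 1 - 18 * Z)
      + (1 - 144 * Z ^ 2 - 18 * Z * Xs * (1 - 12 * Z)))) * hL
    + (36 * Z * (1 - 12 * Z) ^ 2) * hEq4'

end CT


/-- The generating function `R₀(z) ∈ ℚ[[z]]` counting R-colorings of lambda
skeletons of degree 0 (closed normal planar lambda terms) by size. -/
noncomputable def R0 : PowerSeries ℚ :=
  PowerSeries.mk fun n => (colCount Color.R n 0 : ℚ)

lemma R0_eq : R0 = CT.R0q := by
  refine PowerSeries.ext fun n => ?_
  rw [R0, CT.R0q, PowerSeries.coeff_mk, PowerSeries.coeff_mk, colCount_R]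

/-- Proposition 2.10: `R₀(z) = −(1/(54z))(1 − 18z − (1−12z)^{3/2})`, stated
as the algebraic identity `(54·z·R₀(z) + 1 − 18·z)² = (1 − 12·z)³`. -/
theorem R0_algebraic_identity :
    (54 * PowerSeries.X * R0 + 1 - 18 * PowerSeries.X) ^ 2
      = (1 - 12 * PowerSeries.X) ^ 3 := by
  rw [R0_eq]
  exact CT.R0q_identity
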